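/- Let d be a positive integer and let λ = (λ_1, …, λ_d) be a vector with strictly positive entries. Let (T_n) be an arbitrary sequence of real-valued random variables, and let (λ̂_n) be a sequence of random vectors in ℝ^d converging in probability to λ. Define p_n = 1 − H(T_n; λ) and p̂_n = 1 − H(T_n; λ̂_n). Then p̂_n − p_n = ‖λ̂_n − λ‖ · O_P(1): there exists a sequence of random variables (R_n) that is bounded in probability (i.e., for every ε > 0 there exist M > 0 and N such that P(|R_n| > M) < ε for all n ≥ N) with p̂_n − p_n = ‖λ̂_n − λ‖ R_n for all n. -/

import Mathlib

open MeasureTheory ProbabilityTheory Filter Real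

/-- The product of `d` independent standard normal distributions. -/
noncomputable def stdGaussPi (d : ℕ) : Measure (Fin d → ℝ) :=
  Measure.pi fun _ => gaussianReal 0 1

/-- `mixCDF d lam q = H(q; λ) = P(∑ j, λ_j Z_j² ≤ q)` for `Z_1, …, Z_d` IID standard normal. -/
noncomputable def mixCDF (d : ℕ) (lam : Fin d → ℝ) (q : ℝ) : ℝ :=
  (stdGaussPi d {z | ∑ j, lam j * z j ^ 2 ≤ q}).toReal

instance stdGaussPi_prob (d : ℕ) : IsProbabilityMeasure (stdGaussPi d) := by
  unfold stdGaussPi; infer_instance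

lemma gauss_sq_bound {a b u L : ℝ} (hu : 0 < u) (hua : u ≤ a) (hL : b - a ≤ L) (hL0 : 0 ≤ L) :
    gaussianReal 0 1 {x : ℝ | a < x ^ 2 ∧ x ^ 2 ≤ b} ≤
      ENNReal.ofReal (L * Real.exp (-u / 2) / Real.sqrt u) := by
  rcases le_or_gt b a with hba | hab
  · have : {x : ℝ | a < x ^ 2 ∧ x ^ 2 ≤ b} = ∅ := by
      ext x; simp only [Set.mem_setOf_eq, Set.mem_empty_iff_false, iff_false, not_and, not_le]
      intro h; linarith
    rw [this, measure_empty]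
    exact zero_le
  · have ha0 : 0 < a := lt_of_lt_of_le hu hua
    have hb0 : 0 < b := ha0.trans hab
    have hsa : 0 < Real.sqrt a := Real.sqrt_pos.mpr ha0
    have hsu : 0 < Real.sqrt u := Real.sqrt_pos.mpr hu
    -- the set is inside s' := Ioc √a √b ∪ Ico (-√b) (-√a)
    set s' : Set ℝ := Set.Ioc (Real.sqrt a) (Real.sqrt b) ∪ Set.Ico (-Real.sqrt b) (-Real.sqrt a)
      with hs'
    have hsub : {x : ℝ | a < x ^ 2 ∧ x ^ 2 ≤ b} ⊆ s' := by
      intro x hx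
      obtain ⟨h1, h2⟩ := hx
      have hax : Real.sqrt a < |x| := by
        rw [← Real.sqrt_sq_eq_abs]
        exact Real.sqrt_lt_sqrt ha0.le (by nlinarith)
      have hxb : |x| ≤ Real.sqrt b := by
        rw [← Real.sqrt_sq_eq_abs]
        exact Real.sqrt_le_sqrt (by nlinarith)
      rcases le_or_gt 0 x with hx0 | hx0
      · left; constructor
        · rwa [abs_of_nonneg hx0] at hax
        · rwa [abs_of_nonneg hx0] at hxb
      · right; rw [abs_of_neg hx0] at hax hxb
        constructor <;> [linarith; linarith]
    have hms' : MeasurableSet s' := (measurableSet_Ioc).union measurableSet_Ico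
    calc gaussianReal 0 1 {x : ℝ | a < x ^ 2 ∧ x ^ 2 ≤ b} ≤ gaussianReal 0 1 s' :=
          measure_mono hsub
      _ = ∫⁻ x in s', gaussianPDF 0 1 x := gaussianReal_apply 0 one_ne_zero s'
      _ ≤ ∫⁻ _ in s', ENNReal.ofReal (Real.exp (-u / 2)) := by
          refine setLIntegral_mono measurable_const (fun x hx => ?_)
          unfold gaussianPDF gaussianPDFReal
          refine ENNReal.ofReal_le_ofReal ?_
          have hxu : u ≤ x ^ 2 := by
            have : Real.sqrt a < |x| := by
              rcases hx with h | h
              · rw [abs_of_pos (hsa.trans h.1)]; exact h.1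
              · rw [abs_of_neg (by nlinarith [h.2] : x < 0)]; linarith [h.2]
            have : Real.sqrt u ≤ |x| := le_of_lt (lt_of_le_of_lt (Real.sqrt_le_sqrt hua) this)
            nlinarith [Real.sq_sqrt hu.le, abs_nonneg x, sq_abs x]
          have h1 : (Real.sqrt (2 * π * (1 : NNReal)))⁻¹ ≤ 1 := by
            rw [inv_le_one_iff₀]
            right
            rw [show ((1:NNReal):ℝ) = 1 by norm_num, mul_one]
            nlinarith [Real.sq_sqrt (by positivity : (0:ℝ) ≤ 2*π), Real.sqrt_nonneg (2*π), Real.pi_gt_three]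
          have h2 : Real.exp (-(x - 0)^2 / (2*(1:NNReal))) ≤ Real.exp (-u / 2) := by
            apply Real.exp_le_exp.mpr
            rw [show ((1:NNReal):ℝ) = 1 by norm_num]
            ring_nf
            nlinarith
          calc (Real.sqrt (2 * π * (1:NNReal)))⁻¹ * Real.exp (-(x - 0)^2 / (2*(1:NNReal)))
              ≤ 1 * Real.exp (-u / 2) := by
                exact mul_le_mul h1 h2 (Real.exp_nonneg _) zero_le_one
            _ = Real.exp (-u/2) := one_mul _
      _ = ENNReal.ofReal (Real.exp (-u / 2)) * volume s' := by
          rw [setLIntegral_const]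
      _ ≤ ENNReal.ofReal (L * Real.exp (-u / 2) / Real.sqrt u) := by
          have hvol : volume s' ≤ ENNReal.ofReal (L / Real.sqrt u) := by
            have h1 : volume s' ≤ ENNReal.ofReal (Real.sqrt b - Real.sqrt a)
                + ENNReal.ofReal (Real.sqrt b - Real.sqrt a) := by
              refine le_trans (measure_union_le _ _) ?_
              rw [Real.volume_Ioc, Real.volume_Ico]
              apply add_le_add le_rfl
              apply ENNReal.ofReal_le_ofReal; ring_nf; exact le_rfl
            refine le_trans h1 ?_
            rw [← ENNReal.ofReal_add (by nlinarith [Real.sqrt_le_sqrt hab.le]) (by nlinarith [Real.sqrt_le_sqrt hab.le])]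
            apply ENNReal.ofReal_le_ofReal
            have hsab : Real.sqrt a ≤ Real.sqrt b := Real.sqrt_le_sqrt hab.le
            have key : 2 * Real.sqrt a * (Real.sqrt b - Real.sqrt a) ≤ b - a := by
              nlinarith [Real.sq_sqrt ha0.le, Real.sq_sqrt hb0.le, sq_nonneg (Real.sqrt b - Real.sqrt a)]
            have hus : Real.sqrt u ≤ Real.sqrt a := Real.sqrt_le_sqrt hua
            rw [div_eq_mul_inv]
            have h2 : Real.sqrt b - Real.sqrt a ≤ (b - a) / (2 * Real.sqrt a) := by
              rw [le_div_iff₀ (by positivity)]; nlinarith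
            have : (b - a) / (2 * Real.sqrt a) ≤ L / (2 * Real.sqrt u) := by
              apply div_le_div₀ (by linarith) hL (by positivity) (by nlinarith)
            calc Real.sqrt b - Real.sqrt a + (Real.sqrt b - Real.sqrt a)
                = 2 * (Real.sqrt b - Real.sqrt a) := by ring
              _ ≤ 2 * ((b-a) / (2 * Real.sqrt a)) := by linarith
              _ ≤ 2 * (L / (2 * Real.sqrt u)) := by linarith
              _ = L * (Real.sqrt u)⁻¹ := by field_simp
          calc ENNReal.ofReal (Real.exp (-u / 2)) * volume s'
              ≤ ENNReal.ofReal (Real.exp (-u / 2)) * ENNReal.ofReal (L / Real.sqrt u) :=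
                mul_le_mul_right hvol _
            _ = ENNReal.ofReal (Real.exp (-u/2) * (L / Real.sqrt u)) := by
                rw [ENNReal.ofReal_mul (Real.exp_nonneg _)]
            _ = ENNReal.ofReal (L * Real.exp (-u / 2) / Real.sqrt u) := by ring_nf

lemma sqrt_mul_exp_le {α q : ℝ} (hα : 0 < α) (hq : 0 < q) :
    Real.sqrt q * Real.exp (-(α * q)) ≤ Real.sqrt (1 / α) := by
  rcases le_or_gt q (1/α) with h | h
  · calc Real.sqrt q * Real.exp (-(α*q))
        ≤ Real.sqrt q * 1 := by
          apply mul_le_mul_of_nonneg_left _ (Real.sqrt_nonneg q)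
          rw [Real.exp_le_one_iff]; nlinarith
      _ = Real.sqrt q := mul_one _
      _ ≤ Real.sqrt (1/α) := Real.sqrt_le_sqrt h
  · have h1 : Real.exp (-(α*q)) ≤ 1 / (α * q) := by
      rw [Real.exp_neg]
      apply inv_le_of_inv_le₀ (by positivity)
      rw [inv_div, div_one]
      calc α * q ≤ α * q + 1 := by linarith
        _ ≤ Real.exp (α * q) := Real.add_one_le_exp _
    have hsq : 0 < Real.sqrt q := Real.sqrt_pos.mpr hq
    have hs1α : 0 < Real.sqrt (1/α) := Real.sqrt_pos.mpr (by positivity)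
    calc Real.sqrt q * Real.exp (-(α*q))
        ≤ Real.sqrt q * (1 / (α * q)) := by
          apply mul_le_mul_of_nonneg_left h1 (Real.sqrt_nonneg q)
      _ = 1 / (α * Real.sqrt q) := by
          rw [eq_div_iff (by positivity)]
          field_simp
          nlinarith [Real.sq_sqrt hq.le]
      _ ≤ Real.sqrt (1/α) := by
          rw [div_le_iff₀ (by positivity)]
          have h2 : Real.sqrt (1/α) ≤ Real.sqrt q := Real.sqrt_le_sqrt h.le
          have h3 : Real.sqrt (1/α) * (α * Real.sqrt (1/α)) = 1 := by
            rw [show Real.sqrt (1/α) * (α * Real.sqrt (1/α)) = α * (Real.sqrt (1/α) * Real.sqrt (1/α)) by ring,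
              ← Real.sqrt_mul_self (by positivity : (0:ℝ) ≤ 1/α)] at *
            rw [Real.mul_self_sqrt (Real.sqrt_nonneg _), Real.sqrt_mul_self (by positivity)]
            field_simp
          nlinarith

lemma band_bound {m : ℕ} (lam : Fin (m+1) → ℝ) (hlam : ∀ j, 0 < lam j)
    {q t : ℝ} (hq : 0 < q) (ht : 0 < t) (ht2 : t ≤ 1/2) :
    stdGaussPi (m+1) {z | q*(1-t) < ∑ j, lam j * z j ^ 2 ∧ ∑ j, lam j * z j ^ 2 ≤ q*(1+2*t)}
      ≤ ENNReal.ofReal (((m:ℝ)+1) * (12*((m:ℝ)+1)) * t) := by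
  have hcoord : ∀ j : Fin (m+1), Measurable fun z : Fin (m+1) → ℝ => lam j * z j ^ 2 := by
    intro j
    have h : Measurable fun z : Fin (m+1) → ℝ => z j := measurable_pi_apply j
    exact (h.pow_const 2).const_mul (lam j)
  have hYm : Measurable (fun z : Fin (m+1) → ℝ => ∑ j, lam j * z j ^ 2) :=
    Finset.measurable_sum _ (fun j _ => hcoord j)
  set E : Fin (m+1) → Set (Fin (m+1) → ℝ) := fun i =>
    {z | (q*(1-t) < ∑ j, lam j * z j ^ 2 ∧ ∑ j, lam j * z j ^ 2 ≤ q*(1+2*t)) ∧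
      ∑ j, lam j * z j ^ 2 ≤ ((m:ℝ)+1) * (lam i * z i ^ 2)} with hE
  have hEm : ∀ i, MeasurableSet (E i) := by
    intro i
    apply MeasurableSet.inter
    · exact (measurableSet_lt measurable_const hYm).inter (measurableSet_le hYm measurable_const)
    · exact measurableSet_le hYm ((hcoord i).const_mul _)
  have hsub : {z : Fin (m+1) → ℝ | q*(1-t) < ∑ j, lam j * z j ^ 2 ∧
      ∑ j, lam j * z j ^ 2 ≤ q*(1+2*t)} ⊆ ⋃ i, E i := by
    intro z hz
    obtain ⟨i, _, hi⟩ := Finset.exists_max_image Finset.univ (fun j => lam j * z j ^ 2)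
      ⟨0, Finset.mem_univ 0⟩
    refine Set.mem_iUnion.mpr ⟨i, hz, ?_⟩
    calc ∑ j, lam j * z j ^ 2 ≤ ∑ _j : Fin (m+1), lam i * z i ^ 2 :=
          Finset.sum_le_sum (fun j _ => hi j (Finset.mem_univ j))
      _ = ((m:ℝ)+1) * (lam i * z i ^ 2) := by
          rw [Finset.sum_const, Finset.card_univ, Fintype.card_fin, nsmul_eq_mul]
          push_cast; ring
  refine le_trans (measure_mono hsub) (le_trans (measure_iUnion_le E) ?_)
  have hone : ∀ i, stdGaussPi (m+1) (E i) ≤ ENNReal.ofReal ((12*((m:ℝ)+1)) * t) := by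
    intro i
    set e := MeasurableEquiv.piFinSuccAbove (fun _ : Fin (m+1) => ℝ) i with he
    have hmp := measurePreserving_piFinSuccAbove (fun _ : Fin (m+1) => gaussianReal 0 1) i
    have hEs : MeasurableSet (e.symm ⁻¹' E i) := (hEm i).preimage e.symm.measurable
    have h0 : stdGaussPi (m+1) (E i)
        = ((gaussianReal 0 1).prod (Measure.pi fun _ : Fin m => gaussianReal 0 1))
          (e.symm ⁻¹' E i) := by
      have hpre : ⇑e ⁻¹' (⇑e.symm ⁻¹' E i) = E i := by
        rw [← Set.preimage_comp, MeasurableEquiv.symm_comp_self, Set.preimage_id]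
      have h1 := hmp.measure_preimage hEs.nullMeasurableSet
      rw [hpre] at h1
      exact h1
    rw [h0, Measure.prod_apply_symm hEs]
    -- bound the inner measure by a constant
    have hslice : ∀ y : Fin m → ℝ,
        gaussianReal 0 1 ((fun x => (x, y)) ⁻¹' (e.symm ⁻¹' E i))
          ≤ ENNReal.ofReal ((12*((m:ℝ)+1)) * t) := by
      intro y
      set S := ∑ k : Fin m, lam (i.succAbove k) * y k ^ 2 with hSdef
      have hS : 0 ≤ S := Finset.sum_nonneg fun k _ => mul_nonneg (hlam _).le (sq_nonneg _)
      have hsum : ∀ x : ℝ, (∑ j, lam j * (e.symm (x, y)) j ^ 2) = lam i * x ^ 2 + S := by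
        intro x
        set zz : Fin (m+1) → ℝ := i.insertNth x y with hzz
        have hz : e.symm (x, y) = zz := by
          simp [he, hzz, MeasurableEquiv.piFinSuccAbove, Fin.insertNthEquiv]
        rw [hz, Fin.sum_univ_succAbove (fun j => lam j * zz j ^ 2) i]
        simp [hzz, Fin.insertNth_apply_same, Fin.insertNth_apply_succAbove]
        exact hSdef.symm
      have hli : 0 < lam i := hlam i
      set β := ((m:ℝ)+1) * lam i with hβdef
      have hβ : 0 < β := by positivity
      set A := max ((q*(1-t)-S)/lam i) (q*(1-t)/(((m:ℝ)+1)*lam i)) with hA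
      set B := (q*(1+2*t)-S)/lam i with hB
      have hsubset : ((fun x => (x, y)) ⁻¹' (e.symm ⁻¹' E i)) ⊆ {x : ℝ | A < x ^ 2 ∧ x ^ 2 ≤ B} := by
        intro x hx
        simp only [Set.mem_preimage, hE, Set.mem_setOf_eq] at hx
        have hzi : (e.symm (x, y)) i = x := by
          simp [he, MeasurableEquiv.piFinSuccAbove, Fin.insertNthEquiv]
        rw [hsum x, hzi] at hx
        obtain ⟨⟨h1, h2⟩, h3⟩ := hx
        constructor
        · rw [hA, max_lt_iff]
          constructor
          · rw [div_lt_iff₀ hli]; linarith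
          · rw [div_lt_iff₀ (by positivity)]
            nlinarith [h1, h3]
        · rw [hB, le_div_iff₀ hli]; linarith
      have hu0 : (0:ℝ) < q/(2*β) := by positivity
      have hua : q/(2*β) ≤ A := by
        refine le_trans ?_ (le_max_right _ _)
        rw [hβdef, div_le_div_iff₀ (by positivity) (by positivity)]
        have hprod : (0:ℝ) ≤ q * (((m:ℝ)+1) * lam i) * (1 - 2*t) :=
          mul_nonneg (mul_nonneg hq.le (by positivity)) (by linarith)
        nlinarith [hprod]
      have hL : B - A ≤ 3*q*t/lam i := by
        have : (q*(1-t)-S)/lam i ≤ A := le_max_left _ _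
        have hBe : B - (q*(1-t)-S)/lam i = 3*q*t/lam i := by
          rw [hB, div_sub_div_same]; congr 1; ring
        linarith
      have hL0 : (0:ℝ) ≤ 3*q*t/lam i := by positivity
      refine le_trans (measure_mono hsubset) (le_trans (gauss_sq_bound hu0 hua hL hL0) ?_)
      refine ENNReal.ofReal_le_ofReal ?_
      clear hsubset hA hB hua hL hL0 hu0
      clear A B hsum hSdef hS S h0 hEs hE hEm hsub E hYm hcoord hmp
      obtain ⟨sq, rfl, hsqpos⟩ : ∃ sq : ℝ, q = sq^2 ∧ 0 < sq :=
        ⟨Real.sqrt q, (Real.sq_sqrt hq.le).symm, Real.sqrt_pos.mpr hq⟩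
      have e2 : Real.sqrt (sq^2/(2*β)) = sq/Real.sqrt (2*β) := by
        rw [Real.sqrt_div (sq_nonneg sq), Real.sqrt_sq hsqpos.le]
      have e1 : (-(sq^2/(2*β))/2) = (-(1/(4*β) * sq^2)) := by
        rw [neg_div, div_div, one_div_mul_eq_div, show 2*β*2 = 4*β by ring]
      have hmain := sqrt_mul_exp_le (show (0:ℝ) < 1/(4*β) by positivity)
        (show (0:ℝ) < sq^2 by positivity)
      rw [one_div_one_div, Real.sqrt_sq hsqpos.le] at hmain
      have hs2β : 0 < Real.sqrt (2*β) := Real.sqrt_pos.mpr (by positivity)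
      have key : 3*sq^2*t/lam i * Real.exp (-(sq^2/(2*β))/2) / Real.sqrt (sq^2/(2*β))
          = (3*t*Real.sqrt (2*β)/lam i) * (sq * Real.exp (-(1/(4*β) * sq^2))) := by
        rw [e1, e2]
        field_simp [hli.ne', hs2β.ne']
      rw [key]
      have hfin : Real.sqrt (2*β) * Real.sqrt (4*β) ≤ 4*β := by
        rw [← Real.sqrt_mul (by positivity)]
        calc Real.sqrt (2*β*(4*β)) ≤ Real.sqrt ((4*β)^2) := Real.sqrt_le_sqrt (by nlinarith)
          _ = 4*β := Real.sqrt_sq (by positivity)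
      calc (3*t*Real.sqrt (2*β)/lam i) * (sq * Real.exp (-(1/(4*β) * sq^2)))
          ≤ (3*t*Real.sqrt (2*β)/lam i) * Real.sqrt (4*β) := by
            apply mul_le_mul_of_nonneg_left hmain (by positivity)
        _ = (3*t/lam i) * (Real.sqrt (2*β) * Real.sqrt (4*β)) := by ring
        _ ≤ (3*t/lam i) * (4*β) := by
            apply mul_le_mul_of_nonneg_left hfin (by positivity)
        _ = 12*((m:ℝ)+1)*t := by rw [hβdef]; field_simp; ring
    calc (∫⁻ y, gaussianReal 0 1 ((fun x => (x, y)) ⁻¹' (e.symm ⁻¹' E i))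
            ∂(Measure.pi fun _ : Fin m => gaussianReal 0 1))
        ≤ ∫⁻ _y, ENNReal.ofReal ((12*((m:ℝ)+1)) * t)
            ∂(Measure.pi fun _ : Fin m => gaussianReal 0 1) := lintegral_mono hslice
      _ = ENNReal.ofReal ((12*((m:ℝ)+1)) * t) := by
          rw [lintegral_const, measure_univ, mul_one]
  calc ∑' i, stdGaussPi (m+1) (E i)
      ≤ ∑' _i : Fin (m+1), ENNReal.ofReal ((12*((m:ℝ)+1)) * t) := ENNReal.tsum_le_tsum hone
    _ = (((m+1 : ℕ)) : ENNReal) * ENNReal.ofReal ((12*((m:ℝ)+1)) * t) := by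
        rw [tsum_fintype, Finset.sum_const, Finset.card_univ, Fintype.card_fin, nsmul_eq_mul]
    _ = ENNReal.ofReal (((m:ℝ)+1)) * ENNReal.ofReal ((12*((m:ℝ)+1)) * t) := by
        rw [show (((m:ℝ)+1)) = ((m+1 : ℕ) : ℝ) by push_cast; ring, ENNReal.ofReal_natCast]
    _ = ENNReal.ofReal (((m:ℝ)+1) * ((12*((m:ℝ)+1)) * t)) := by
        rw [← ENNReal.ofReal_mul (by positivity)]
    _ = ENNReal.ofReal (((m:ℝ)+1) * (12*((m:ℝ)+1)) * t) := by ring_nf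

lemma key_lip {m : ℕ} (lam : Fin (m+1) → ℝ) (hlam : ∀ j, 0 < lam j)
    {c : ℝ} (hc : 0 < c) (hcle : ∀ j, c ≤ lam j)
    (lamH : Fin (m+1) → ℝ) (hδ : ‖lamH - lam‖ ≤ c/2) (q : ℝ) :
    |mixCDF (m+1) lamH q - mixCDF (m+1) lam q|
      ≤ (((m:ℝ)+1) * (12*((m:ℝ)+1)) / c) * ‖lamH - lam‖ := by
  set δ := ‖lamH - lam‖ with hδdef
  have hδ0 : 0 ≤ δ := norm_nonneg _
  have hbd : ∀ j, |lamH j - lam j| ≤ δ := by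
    intro j
    have h := norm_le_pi_norm (lamH - lam) j
    simpa using h
  have hHpos : ∀ j, 0 < lamH j := by
    intro j
    have h1 := (abs_le.mp (hbd j)).1
    have h2 := hcle j
    have h3 : δ ≤ c/2 := hδ
    linarith
  rcases eq_or_lt_of_le hδ0 with hδeq | hδpos
  · have hlameq : lamH = lam := by
      have h : lamH - lam = 0 := by
        rw [← norm_eq_zero]; exact hδeq.symm ▸ rfl
      exact sub_eq_zero.mp h
    rw [hlameq, sub_self, abs_zero, ← hδeq, mul_zero]
  · rcases le_or_gt q 0 with hq | hq
    · -- for q ≤ 0 the two sets coincide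
      have hsets : {z : Fin (m+1) → ℝ | ∑ j, lamH j * z j ^ 2 ≤ q}
          = {z : Fin (m+1) → ℝ | ∑ j, lam j * z j ^ 2 ≤ q} := by
        have haux : ∀ (mu : Fin (m+1) → ℝ), (∀ j, 0 < mu j) →
            ∀ z : Fin (m+1) → ℝ, (∑ j, mu j * z j ^ 2 ≤ q) → ∀ j, z j = 0 := by
          intro mu hmu z hz j
          by_contra hzj
          have hterm : 0 < mu j * z j ^ 2 :=
            mul_pos (hmu j) (lt_of_le_of_ne (sq_nonneg _) (Ne.symm (pow_ne_zero 2 hzj)))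
          have hsum : mu j * z j ^ 2 ≤ ∑ k, mu k * z k ^ 2 :=
            Finset.single_le_sum (fun k _ => mul_nonneg (hmu k).le (sq_nonneg _))
              (Finset.mem_univ j)
          linarith
        ext z
        simp only [Set.mem_setOf_eq]
        constructor
        · intro h
          have hz := haux lamH hHpos z h
          have h0 : ∑ j, lamH j * z j ^ 2 = 0 := by
            apply Finset.sum_eq_zero; intro j _; rw [hz j]; ring
          rw [h0] at h
          calc ∑ j, lam j * z j ^ 2 = 0 := by
                apply Finset.sum_eq_zero; intro j _; rw [hz j]; ring
            _ ≤ q := h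
        · intro h
          have hz := haux lam hlam z h
          have h0 : ∑ j, lam j * z j ^ 2 = 0 := by
            apply Finset.sum_eq_zero; intro j _; rw [hz j]; ring
          rw [h0] at h
          calc ∑ j, lamH j * z j ^ 2 = 0 := by
                apply Finset.sum_eq_zero; intro j _; rw [hz j]; ring
            _ ≤ q := h
      unfold mixCDF
      rw [hsets, sub_self, abs_zero]
      positivity
    · -- main case: q > 0, δ > 0
      set t := δ/c with ht_def
      have ht : 0 < t := div_pos hδpos hc
      have ht2 : t ≤ 1/2 := by
        rw [ht_def, div_le_div_iff₀ hc (by norm_num : (0:ℝ) < 2)]; linarith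
      have hpert : ∀ z : Fin (m+1) → ℝ,
          |(∑ j, lamH j * z j ^ 2) - ∑ j, lam j * z j ^ 2| ≤ t * ∑ j, lam j * z j ^ 2 := by
        intro z
        have h1 : (∑ j, lamH j * z j ^ 2) - (∑ j, lam j * z j ^ 2)
            = ∑ j, (lamH j - lam j) * z j ^ 2 := by
          rw [← Finset.sum_sub_distrib]
          congr 1; ext j; ring
        rw [h1]
        have h2 : c * ∑ j, z j ^ 2 ≤ ∑ j, lam j * z j ^ 2 := by
          rw [Finset.mul_sum]
          exact Finset.sum_le_sum fun j _ => mul_le_mul_of_nonneg_right (hcle j) (sq_nonneg _)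
        calc |∑ j, (lamH j - lam j) * z j ^ 2| ≤ ∑ j, |(lamH j - lam j) * z j ^ 2| :=
              Finset.abs_sum_le_sum_abs _ _
          _ ≤ ∑ j, δ * z j ^ 2 := by
              apply Finset.sum_le_sum
              intro j _
              rw [abs_mul, abs_of_nonneg (sq_nonneg (z j))]
              exact mul_le_mul_of_nonneg_right (hbd j) (sq_nonneg _)
          _ = δ * ∑ j, z j ^ 2 := by rw [Finset.mul_sum]
          _ ≤ t * ∑ j, lam j * z j ^ 2 := by
              have h3 := mul_le_mul_of_nonneg_left h2 (le_of_lt ht)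
              rw [ht_def]
              rw [show δ/c * (c * ∑ j, z j ^ 2) = δ * ∑ j, z j ^ 2 by
                field_simp] at h3
              rw [ht_def] at h3
              exact h3
      set Eb : Set (Fin (m+1) → ℝ) :=
        {z | q*(1-t) < ∑ j, lam j * z j ^ 2 ∧ ∑ j, lam j * z j ^ 2 ≤ q*(1+2*t)} with hEb
      have hAB : {z : Fin (m+1) → ℝ | ∑ j, lamH j * z j ^ 2 ≤ q}
          ⊆ {z : Fin (m+1) → ℝ | ∑ j, lam j * z j ^ 2 ≤ q} ∪ Eb := by
        intro z hz
        simp only [Set.mem_setOf_eq, Set.mem_union, hEb] at hz ⊢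
        rcases le_or_gt (∑ j, lam j * z j ^ 2) q with h | h
        · exact Or.inl h
        · right
          have hp := abs_le.mp (hpert z)
          have hp1 := hp.1
          constructor
          · nlinarith [mul_pos hq ht]
          · nlinarith [mul_nonneg (mul_nonneg ht.le (by linarith : (0:ℝ) ≤ 1 - 2*t))
                (by linarith : (0:ℝ) ≤ ∑ j, lam j * z j ^ 2),
              mul_nonneg (by linarith : (0:ℝ) ≤ 1+2*t)
                (by linarith : (0:ℝ) ≤ q - ((∑ j, lam j * z j ^ 2) - t * ∑ j, lam j * z j ^ 2))]
      have hBA : {z : Fin (m+1) → ℝ | ∑ j, lam j * z j ^ 2 ≤ q}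
          ⊆ {z : Fin (m+1) → ℝ | ∑ j, lamH j * z j ^ 2 ≤ q} ∪ Eb := by
        intro z hz
        simp only [Set.mem_setOf_eq, Set.mem_union, hEb] at hz ⊢
        rcases le_or_gt (∑ j, lamH j * z j ^ 2) q with h | h
        · exact Or.inl h
        · right
          have hp := abs_le.mp (hpert z)
          have hp2 := hp.2
          constructor
          · nlinarith [mul_nonneg ht.le (by linarith : (0:ℝ) ≤ q - ∑ j, lam j * z j ^ 2)]
          · nlinarith [mul_nonneg hq.le ht.le]
      have hEbound := band_bound lam hlam hq ht ht2
      have h1 : stdGaussPi (m+1) {z : Fin (m+1) → ℝ | ∑ j, lamH j * z j ^ 2 ≤ q}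
          ≤ stdGaussPi (m+1) {z : Fin (m+1) → ℝ | ∑ j, lam j * z j ^ 2 ≤ q}
            + stdGaussPi (m+1) Eb :=
        le_trans (measure_mono hAB) (measure_union_le _ _)
      have h2 : stdGaussPi (m+1) {z : Fin (m+1) → ℝ | ∑ j, lam j * z j ^ 2 ≤ q}
          ≤ stdGaussPi (m+1) {z : Fin (m+1) → ℝ | ∑ j, lamH j * z j ^ 2 ≤ q}
            + stdGaussPi (m+1) Eb :=
        le_trans (measure_mono hBA) (measure_union_le _ _)
      have hEreal : (stdGaussPi (m+1) Eb).toReal ≤ (((m:ℝ)+1) * (12*((m:ℝ)+1))) * t := by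
        apply ENNReal.toReal_le_of_le_ofReal (by positivity)
        exact hEbound
      have hA1 : (stdGaussPi (m+1) {z : Fin (m+1) → ℝ | ∑ j, lamH j * z j ^ 2 ≤ q}).toReal
          ≤ (stdGaussPi (m+1) {z : Fin (m+1) → ℝ | ∑ j, lam j * z j ^ 2 ≤ q}).toReal
            + (stdGaussPi (m+1) Eb).toReal := by
        rw [← ENNReal.toReal_add (measure_ne_top _ _) (measure_ne_top _ _)]
        exact ENNReal.toReal_mono
          (ENNReal.add_ne_top.mpr ⟨measure_ne_top _ _, measure_ne_top _ _⟩) h1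
      have hA2 : (stdGaussPi (m+1) {z : Fin (m+1) → ℝ | ∑ j, lam j * z j ^ 2 ≤ q}).toReal
          ≤ (stdGaussPi (m+1) {z : Fin (m+1) → ℝ | ∑ j, lamH j * z j ^ 2 ≤ q}).toReal
            + (stdGaussPi (m+1) Eb).toReal := by
        rw [← ENNReal.toReal_add (measure_ne_top _ _) (measure_ne_top _ _)]
        exact ENNReal.toReal_mono
          (ENNReal.add_ne_top.mpr ⟨measure_ne_top _ _, measure_ne_top _ _⟩) h2
      have hDt : (((m:ℝ)+1) * (12*((m:ℝ)+1))) * t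
          = (((m:ℝ)+1) * (12*((m:ℝ)+1)) / c) * δ := by
        rw [ht_def]; field_simp
      unfold mixCDF
      rw [abs_sub_le_iff]
      constructor
      · linarith
      · linarith

theorem stmt1 {Ω : Type*} [MeasurableSpace Ω] (P : Measure Ω) [IsProbabilityMeasure P]
    (d : ℕ) (hd : 0 < d) (lam : Fin d → ℝ) (hlam : ∀ j, 0 < lam j)
    (T : ℕ → Ω → ℝ) (hT : ∀ n, Measurable (T n))
    (lamHat : ℕ → Ω → Fin d → ℝ) (hlamHat : ∀ n, Measurable (lamHat n))
    (hprob : ∀ ε > 0, Tendsto (fun n => P {ω | ε < ‖lamHat n ω - lam‖}) atTop (nhds 0)) :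
    ∃ R : ℕ → Ω → ℝ,
      (∀ ε > 0, ∃ M > (0 : ℝ), ∃ N : ℕ, ∀ n ≥ N,
        P {ω | M < |R n ω|} < ENNReal.ofReal ε) ∧
      (∀ n ω,
        (1 - mixCDF d (lamHat n ω) (T n ω)) - (1 - mixCDF d lam (T n ω)) =
          ‖lamHat n ω - lam‖ * R n ω) := by
  obtain ⟨m, rfl⟩ : ∃ m, d = m + 1 := ⟨d - 1, (Nat.succ_pred_eq_of_pos hd).symm⟩
  obtain ⟨j₀, -, hj₀⟩ := Finset.exists_min_image Finset.univ lam ⟨0, Finset.mem_univ 0⟩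
  have hc0 : 0 < lam j₀ := hlam j₀
  have hcle : ∀ j, lam j₀ ≤ lam j := fun j => hj₀ j (Finset.mem_univ j)
  set c := lam j₀ with hc
  set C : ℝ := ((m:ℝ)+1) * (12*((m:ℝ)+1)) / c with hCdef
  have hC0 : 0 ≤ C := by
    rw [hCdef]
    apply div_nonneg (by positivity) hc0.le
  refine ⟨fun n ω =>
    ((1 - mixCDF (m+1) (lamHat n ω) (T n ω)) - (1 - mixCDF (m+1) lam (T n ω)))
      / ‖lamHat n ω - lam‖, ?_, ?_⟩
  · intro ε hε
    refine ⟨C + 1, by linarith, ?_⟩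
    have h0 := hprob (c/2) (by linarith)
    have hev : ∀ᶠ n in atTop, P {ω | c/2 < ‖lamHat n ω - lam‖} < ENNReal.ofReal ε :=
      Filter.Tendsto.eventually_lt_const (ENNReal.ofReal_pos.mpr hε) h0
    obtain ⟨N, hN⟩ := eventually_atTop.mp hev
    refine ⟨N, fun n hn => ?_⟩
    refine lt_of_le_of_lt (measure_mono fun ω hω => ?_) (hN n hn)
    simp only [Set.mem_setOf_eq] at hω ⊢
    by_contra hcon
    push_neg at hcon
    have hkey := key_lip lam hlam hc0 hcle (lamHat n ω) hcon (T n ω)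
    have hRle : |((1 - mixCDF (m+1) (lamHat n ω) (T n ω))
        - (1 - mixCDF (m+1) lam (T n ω))) / ‖lamHat n ω - lam‖| ≤ C := by
      rcases eq_or_ne (‖lamHat n ω - lam‖) 0 with h | h
      · rw [h, div_zero, abs_zero]; exact hC0
      · have hpos : 0 < ‖lamHat n ω - lam‖ := lt_of_le_of_ne (norm_nonneg _) (Ne.symm h)
        rw [abs_div, abs_of_pos hpos, div_le_iff₀ hpos]
        rw [show (1 - mixCDF (m+1) (lamHat n ω) (T n ω)) - (1 - mixCDF (m+1) lam (T n ω))
          = -(mixCDF (m+1) (lamHat n ω) (T n ω) - mixCDF (m+1) lam (T n ω)) by ring, abs_neg]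
        rw [hCdef]
        exact hkey
    linarith
  · intro n ω
    rcases eq_or_ne (lamHat n ω) lam with h | h
    · rw [h]
      simp
    · have hne : ‖lamHat n ω - lam‖ ≠ 0 := by
        simpa [sub_eq_zero] using h
      rw [mul_comm, div_mul_cancel₀ _ hne]
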